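/- Let S be a primitive countably compact Hausdorff topological inverse semigroup, written as an orthogonal sum Σ_{i∈A} B_{λ_i}(G_i) of Brandt extensions of topological groups. Then the family B(0) = { S \ (B_{λ_{i_1}}(G_{i_1}) ∪ ⋯ ∪ B_{λ_{i_n}}(G_{i_n}))^* : i_1,…,i_n ∈ A, n ∈ N } is a neighbourhood base at the zero 0 of S, where for a subset T containing 0, T^* denotes T \ {0}. -/

import Mathlib

/-- A space is countably compact if every countable open cover has a finite
subcover. -/
def CountablyCompact (X : Type*) [TopologicalSpace X] : Prop :=
  ∀ U : ℕ → Set X, (∀ n, IsOpen (U n)) → (⋃ n, U n) = Set.univ →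
    ∃ t : Finset ℕ, (⋃ n ∈ t, U n) = Set.univ

/-- `inv` is an inversion making the semigroup an inverse semigroup. -/
def InvSgrp {S : Type*} [Semigroup S] (inv : S → S) : Prop :=
  (∀ x : S, x * inv x * x = x) ∧ (∀ x : S, inv x * x * inv x = inv x) ∧
    ∀ x y : S, x * y * x = x → y * x * y = y → y = inv x

/-- Let `S` be a primitive countably compact Hausdorff topological
inverse semigroup, written as an orthogonal sum of Brandt extensions
`B_{λ i}(G i)` of topological groups (the non-zero part of each summand embedded via
`f i`).  Then the family of sets `S \ (B_{i₁} ∪ ⋯ ∪ B_{iₙ})^*`, i.e. the complements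
of the unions of finitely many non-zero parts `range (f i)`, is a neighbourhood base
at the zero `0` of `S`. -/
theorem stmt_9 {S : Type*} [SemigroupWithZero S] [TopologicalSpace S] [T2Space S]
    [ContinuousMul S]
    (inv : S → S) (hinvc : Continuous inv) (hinv : InvSgrp inv)
    (hcc : CountablyCompact S)
    {ι : Type*} {L : ι → Type*} {G : ι → Type*}
    [∀ i, Group (G i)] [∀ i, TopologicalSpace (G i)] [∀ i, IsTopologicalGroup (G i)]
    (f : ∀ i, L i × G i × L i → S)
    (hne : ∀ i p, f i p ≠ 0)
    (hinj : ∀ i, Function.Injective (f i))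
    (hdis : ∀ i j, i ≠ j → ∀ p q, f i p ≠ f j q)
    (hcover : ∀ x : S, x ≠ 0 → ∃ i p, f i p = x)
    (hbrandt : ∀ i (a : L i) (g : G i) (b c : L i) (h : G i) (d : L i),
      (b = c → f i (a, g, b) * f i (c, h, d) = f i (a, g * h, d)) ∧
      (b ≠ c → f i (a, g, b) * f i (c, h, d) = 0))
    (hcross : ∀ i j, i ≠ j → ∀ p q, f i p * f j q = 0)
    (hemb : ∀ i (a : L i), Topology.IsEmbedding fun g : G i => f i (a, g, a)) :
    (nhds (0 : S)).HasBasis (fun _ : Finset ι => True)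
      (fun F => (⋃ i ∈ F, Set.range (f i))ᶜ) := by
  -- basic algebraic facts
  have hinv0 : inv (0 : S) = 0 :=
    (hinv.2.2 0 0 (by simp) (by simp)).symm
  have hinvf : ∀ i (c : L i) (g : G i) (d : L i),
      inv (f i (c, g, d)) = f i (d, g⁻¹, c) := by
    intro i c g d
    refine (hinv.2.2 _ _ ?_ ?_).symm
    · rw [(hbrandt i c g d d g⁻¹ c).1 rfl, (hbrandt i c (g * g⁻¹) c c g d).1 rfl]
      simp
    · rw [(hbrandt i d g⁻¹ c c g d).1 rfl, (hbrandt i d (g⁻¹ * g) d d g⁻¹ c).1 rfl]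
      simp
  -- the map χ : y ↦ y * inv y
  set χ : S → S := fun y => y * inv y with hχdef
  have hχc : Continuous χ := continuous_id.mul hinvc
  have hχ0 : χ 0 = 0 := by simp [hχdef, hinv0]
  have hχf : ∀ i (c : L i) (g : G i) (d : L i), χ (f i (c, g, d)) = f i (c, 1, c) := by
    intro i c g d
    simp only [hχdef]
    rw [hinvf, (hbrandt i c g d d g⁻¹ c).1 rfl]
    simp
  -- Lemma A : every nonzero element has an open neighbourhood inside its H-class
  have lemA : ∀ j (c : L j) (g : G j) (d : L j), ∃ V : Set S, IsOpen V ∧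
      f j (c, g, d) ∈ V ∧ ∀ z ∈ V, ∃ h : G j, z = f j (c, h, d) := by
    intro j c g d
    have hcont : Continuous fun z : S => f j (c, 1, c) * z * f j (d, 1, d) :=
      (continuous_const.mul continuous_id).mul continuous_const
    refine ⟨(fun z : S => f j (c, 1, c) * z * f j (d, 1, d)) ⁻¹' {(0 : S)}ᶜ,
      isOpen_compl_singleton.preimage hcont, ?_, ?_⟩
    · refine Set.mem_preimage.mpr ?_
      show f j (c, 1, c) * f j (c, g, d) * f j (d, 1, d) ∈ {(0 : S)}ᶜ
      rw [(hbrandt j c 1 c c g d).1 rfl, (hbrandt j c (1 * g) d d 1 d).1 rfl]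
      simpa using hne j (c, g, d)
    · intro z hz
      simp only [Set.mem_preimage, Set.mem_compl_iff, Set.mem_singleton_iff] at hz
      rcases eq_or_ne z 0 with rfl | hz0
      · exact absurd (by simp) hz
      · obtain ⟨i, ⟨a, h, b⟩, rfl⟩ := hcover z hz0
        by_cases hij : i = j
        · subst hij
          by_cases hca : c = a
          · subst hca
            rw [(hbrandt i c 1 c c h b).1 rfl] at hz
            by_cases hbd : b = d
            · subst hbd
              exact ⟨h, rfl⟩
            · rw [(hbrandt i c (1 * h) b d 1 d).2 hbd] at hz
              exact absurd rfl hz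
          · rw [(hbrandt i c 1 c a h b).2 hca, zero_mul] at hz
            exact absurd rfl hz
        · rw [hcross j i (fun e => hij e.symm) (c, 1, c) (a, h, b), zero_mul] at hz
          exact absurd rfl hz
  -- NAP : no injective sequence may have only "finite-meeting" neighbourhoods everywhere
  have nap : ∀ x : ℕ → S, Function.Injective x →
      (∀ y : S, ∃ V : Set S, IsOpen V ∧ y ∈ V ∧ {n | x n ∈ V}.Finite) → False := by
    intro x hxinj h
    choose V hVo hVm hVf using h
    have hro : IsOpen (Set.range x)ᶜ := by
      rw [isOpen_iff_mem_nhds]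
      intro y hy
      have hcl : IsClosed (x '' {n | x n ∈ V y}) := ((hVf y).image x).isClosed
      refine Filter.mem_of_superset (((hVo y).sdiff hcl).mem_nhds ⟨hVm y, ?_⟩) ?_
      · rintro ⟨n, -, hn⟩
        exact hy ⟨n, hn⟩
      · rintro z ⟨hz1, hz2⟩ ⟨n, rfl⟩
        exact hz2 ⟨n, hz1, rfl⟩
    set U : ℕ → Set S := fun n => Nat.casesOn n (Set.range x)ᶜ (fun m => V (x m)) with hU
    obtain ⟨t, ht⟩ := hcc U
      (by rintro (_ | n); exacts [hro, hVo _])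
      (by
        ext z
        simp only [Set.mem_iUnion, Set.mem_univ, iff_true]
        by_cases hz : z ∈ Set.range x
        · rcases hz with ⟨n, rfl⟩
          exact ⟨n + 1, hVm _⟩
        · exact ⟨0, hz⟩)
    have hfin : (Set.univ : Set ℕ).Finite := by
      have hsub : (Set.univ : Set ℕ) ⊆ ⋃ k ∈ t, {n | x n ∈ U k} := by
        intro n _
        have hx : x n ∈ ⋃ k ∈ t, U k := ht ▸ Set.mem_univ _
        simp only [Set.mem_iUnion] at hx ⊢
        exact hx
      refine Set.Finite.subset (Set.Finite.biUnion t.finite_toSet ?_) hsub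
      rintro (_ | k) -
      · refine Set.Finite.subset Set.finite_empty ?_
        rintro n hn
        exact absurd ⟨n, rfl⟩ hn
      · exact hVf _
    exact Set.infinite_univ hfin
  -- each L i is finite
  have hLfin : ∀ i, Finite (L i) := by
    intro i
    by_contra hfin
    rw [not_finite_iff_infinite] at hfin
    have a : ℕ ↪ L i := @Infinite.natEmbedding (L i) hfin
    set x : ℕ → S := fun n => f i (a 0, 1, a n) with hx
    refine nap x ?_ ?_
    · intro m n hmn
      exact a.injective (congrArg (fun p => p.2.2) (hinj i hmn))
    · intro y
      rcases eq_or_ne y 0 with rfl | hy0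
      · refine ⟨χ ⁻¹' {f i (a 0, 1, a 0)}ᶜ, isOpen_compl_singleton.preimage hχc, ?_, ?_⟩
        · refine Set.mem_preimage.mpr ?_
          show χ 0 ∈ {f i (a 0, 1, a 0)}ᶜ
          rw [hχ0]
          exact fun e => hne i _ e.symm
        · refine Set.Finite.subset Set.finite_empty ?_
          intro n hn
          exact hn (by rw [Set.mem_singleton_iff, hx, hχf])
      · obtain ⟨j, ⟨c, g, d⟩, rfl⟩ := hcover y hy0
        obtain ⟨V, hVo, hVm, hVsub⟩ := lemA j c g d
        refine ⟨V, hVo, hVm, Set.Subsingleton.finite ?_⟩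
        intro m hm n hn
        obtain ⟨h1, e1⟩ := hVsub _ hm
        obtain ⟨h2, e2⟩ := hVsub _ hn
        by_cases hij : i = j
        · subst hij
          exact a.injective ((congrArg (fun p => p.2.2) (hinj i e1)).trans
            (congrArg (fun p => p.2.2) (hinj i e2)).symm)
        · exact absurd e1 (hdis i j hij _ _)
  -- direction 1: each basic set is a neighbourhood of 0
  have dir1 : ∀ F : Finset ι, (⋃ i ∈ F, Set.range (f i))ᶜ ∈ nhds (0 : S) := by
    intro F
    have hVo : IsOpen (⋂ i ∈ F, ⋂ a : L i, χ ⁻¹' {f i (a, 1, a)}ᶜ) := by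
      refine isOpen_biInter_finset fun i _ => ?_
      haveI := hLfin i
      exact isOpen_iInter_of_finite fun a => isOpen_compl_singleton.preimage hχc
    refine Filter.mem_of_superset (hVo.mem_nhds ?_) ?_
    · simp only [Set.mem_iInter, Set.mem_preimage, Set.mem_compl_iff,
        Set.mem_singleton_iff]
      intro i _ a
      rw [hχ0]
      exact fun e => hne i _ e.symm
    · intro z hz
      simp only [Set.mem_iInter, Set.mem_preimage, Set.mem_compl_iff,
        Set.mem_singleton_iff] at hz
      intro hz2
      simp only [Set.mem_iUnion] at hz2
      obtain ⟨i, hiF, ⟨c, g, d⟩, rfl⟩ := hz2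
      exact hz i hiF c (hχf i c g d)
  -- direction 2: every neighbourhood of 0 contains a basic set
  have dir2 : ∀ t : Set S, t ∈ nhds (0 : S) →
      ∃ F : Finset ι, (⋃ i ∈ F, Set.range (f i))ᶜ ⊆ t := by
    intro t ht
    obtain ⟨W, hWt, hWo, hW0⟩ := mem_nhds_iff.mp ht
    set I : Set ι := {i | ∃ z ∈ Set.range (f i), z ∉ W} with hI
    have hIfin : I.Finite := by
      by_contra hinf
      have hinf' : I.Infinite := hinf
      set e : ℕ ↪ ↥I := hinf'.natEmbedding I with he
      have hprop : ∀ n : ℕ, ∃ z ∈ Set.range (f ((e n) : ι)), z ∉ W := fun n => (e n).2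
      choose z hz1 hz2 using hprop
      have hidx : ∀ {m n : ℕ}, z m = z n → m = n := by
        intro m n hzz
        obtain ⟨p, hp⟩ := hz1 m
        obtain ⟨q, hq⟩ := hz1 n
        have hval : ((e m) : ι) = ((e n) : ι) := by
          by_contra hne'
          exact hdis _ _ hne' p q (hp.trans (hzz.trans hq.symm))
        exact e.injective (Subtype.ext hval)
      refine nap z (fun m n hmn => hidx hmn) ?_
      intro y
      rcases eq_or_ne y 0 with rfl | hy0
      · refine ⟨W, hWo, hW0, Set.Finite.subset Set.finite_empty ?_⟩
        intro n hn
        exact absurd hn (hz2 n)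
      · obtain ⟨j, ⟨c, g, d⟩, rfl⟩ := hcover y hy0
        obtain ⟨V, hVo, hVm, hVsub⟩ := lemA j c g d
        refine ⟨V, hVo, hVm, Set.Subsingleton.finite ?_⟩
        intro m hm n hn
        obtain ⟨h1, e1⟩ := hVsub _ hm
        obtain ⟨h2, e2⟩ := hVsub _ hn
        have hm' : ((e m) : ι) = j := by
          by_contra hne'
          obtain ⟨p, hp⟩ := hz1 m
          exact hdis _ _ hne' p (c, h1, d) (hp.trans e1)
        have hn' : ((e n) : ι) = j := by
          by_contra hne'
          obtain ⟨p, hp⟩ := hz1 n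
          exact hdis _ _ hne' p (c, h2, d) (hp.trans e2)
        exact e.injective (Subtype.ext (hm'.trans hn'.symm))
    refine ⟨hIfin.toFinset, ?_⟩
    intro s hs
    by_cases hsW : s ∈ W
    · exact hWt hsW
    · exfalso
      have hs0 : s ≠ 0 := fun h => hsW (h ▸ hW0)
      obtain ⟨j, p, rfl⟩ := hcover s hs0
      refine hs ?_
      simp only [Set.mem_iUnion]
      exact ⟨j, by
        rw [Set.Finite.mem_toFinset]
        exact ⟨f j p, ⟨p, rfl⟩, hsW⟩, ⟨p, rfl⟩⟩
  constructor
  intro t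
  constructor
  · intro ht
    obtain ⟨F, hF⟩ := dir2 t ht
    exact ⟨F, trivial, hF⟩
  · rintro ⟨F, -, hF⟩
    exact Filter.mem_of_superset (dir1 F) hF
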